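/- arXiv:2504.01042 — 5 statements merged into one kernel-verified Lean document; each statement's English description precedes it below -/
import Mathlib

section
/- If φ is a bounded analytic function on the unit disk, then T_φ W = W T_{φ(z^2)}, where T_φ is the Toeplitz operator on the Bergman space and W is the slant operator. -/
/-- If `φ` is a bounded analytic function on the unit disk with Taylor
coefficients `a`, then on the Bergman space (modeled as a complex Hilbert space
`H` with monomials `e n = z^n`, `⟪z^j, z^k⟫ = δ_{jk}/(j+1)`, dense span) one has
`T_φ W = W T_{φ(z²)}`, where `T_φ` and `T_{φ(z²)}` are the Toeplitz operators,
characterized on monomials by `T_φ z^k = Σ_n a_n z^{n+k}` and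
`T_{φ(z²)} z^k = Σ_n a_n z^{2n+k}`, and `W` is the slant operator. -/
theorem toeplitz_comp_slant
    {H : Type*} [NormedAddCommGroup H] [InnerProductSpace ℂ H] [CompleteSpace H]
    (e : ℕ → H)
    (he : ∀ j k : ℕ, (inner ℂ (e j) (e k) : ℂ) = if j = k then 1 / ((j : ℂ) + 1) else 0)
    (hdense : (Submodule.span ℂ (Set.range e)).topologicalClosure = ⊤)
    (W : H →L[ℂ] H)
    (hW0 : ∀ n : ℕ, W (e (2 * n)) = e n)
    (hW1 : ∀ n : ℕ, W (e (2 * n + 1)) = 0)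
    (φ : ℂ → ℂ) (a : ℕ → ℂ) (C : ℝ)
    (hφ : ∀ z ∈ Metric.ball (0 : ℂ) 1, HasSum (fun n : ℕ => a n * z ^ n) (φ z))
    (hφbd : ∀ z ∈ Metric.ball (0 : ℂ) 1, ‖φ z‖ ≤ C)
    (T T2 : H →L[ℂ] H)
    (hT : ∀ k : ℕ, HasSum (fun n : ℕ => a n • e (n + k)) (T (e k)))
    (hT2 : ∀ k : ℕ, HasSum (fun n : ℕ => a n • e (2 * n + k)) (T2 (e k))) :
    T.comp W = W.comp T2 := by
  have key : ∀ k : ℕ, T (W (e k)) = W (T2 (e k)) := by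
    intro k
    rcases Nat.even_or_odd k with ⟨m, hm⟩ | ⟨m, hm⟩
    · subst hm
      have h1 : W (e (m + m)) = e m := by
        have := hW0 m; rwa [two_mul] at this
      rw [h1]
      have h2 : HasSum (fun n : ℕ => a n • W (e (2 * n + (m + m)))) (W (T2 (e (m + m)))) := by
        simpa using (hT2 (m + m)).mapL W
      have h3 : (fun n : ℕ => a n • W (e (2 * n + (m + m)))) = fun n : ℕ => a n • e (n + m) := by
        funext n
        have : 2 * n + (m + m) = 2 * (n + m) := by ring
        rw [this, hW0]
      rw [h3] at h2
      exact (hT m).unique h2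
    · subst hm
      have h1 : W (e (2 * m + 1)) = 0 := hW1 m
      rw [h1, map_zero]
      have h2 : HasSum (fun n : ℕ => a n • W (e (2 * n + (2 * m + 1)))) (W (T2 (e (2 * m + 1)))) := by
        simpa using (hT2 (2 * m + 1)).mapL W
      have h3 : (fun n : ℕ => a n • W (e (2 * n + (2 * m + 1)))) = fun _ => (0 : H) := by
        funext n
        have : 2 * n + (2 * m + 1) = 2 * (n + m) + 1 := by ring
        rw [this, hW1, smul_zero]
      rw [h3] at h2
      exact hasSum_zero.unique h2
  have hd : Dense ((Submodule.span ℂ (Set.range e) : Submodule ℂ H) : Set H) := by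
    rw [Submodule.dense_iff_topologicalClosure_eq_top]; exact hdense
  refine ContinuousLinearMap.ext_on hd ?_
  rintro x ⟨k, rfl⟩
  simpa using key k
end

section
/- Let φ, ψ be bounded analytic functions on the unit disk and let a be a nonzero real number. If the slant Toeplitz operators B_f and B_g with symbols f = a z̄ + φ and g = z̄ + ψ commute on the Bergman space, then φ = a ψ, and hence f = a g. -/
/-- Auxiliary coefficient function: `(m+1)*⟨e m, (W∘(l•Tc+T)) (e j)⟩` in closed form. -/
private noncomputable def slantFc (l : ℂ) (co : ℕ → ℂ) (m j : ℕ) : ℂ :=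
  (if j = 2*m+1 then l * ((2*(m:ℂ)+1)/(2*(m:ℂ)+2)) * (1/((m:ℂ)+1)) else 0)
  + (if j ≤ 2*m then co (2*m-j) * (1/((m:ℂ)+1)) else 0)

/-- Let `φ, ψ` be bounded analytic functions on the unit disk (with Taylor
coefficients `a`, `b`) and `a₀` a nonzero real number.  On the Bergman space
(modeled as a complex Hilbert space `H` with monomials `e n = z^n`,
`⟪z^j, z^k⟫ = δ_{jk}/(j+1)`, dense span) with slant operator `W` and Toeplitz
operators `Tφ = T_φ`, `Tψ = T_ψ`, `Tc = T_z̄` characterized on monomials, if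
the slant Toeplitz operators `B_f = W(a₀ T_z̄ + T_φ)` and
`B_g = W(T_z̄ + T_ψ)` with symbols `f = a₀ z̄ + φ`, `g = z̄ + ψ` commute,
then `φ = a₀ ψ` and hence `f = a₀ g` on the disk. -/
theorem commuting_slant_toeplitz_conj_z
    {H : Type*} [NormedAddCommGroup H] [InnerProductSpace ℂ H] [CompleteSpace H]
    (e : ℕ → H)
    (he : ∀ j k : ℕ, (inner ℂ (e j) (e k) : ℂ) = if j = k then 1 / ((j : ℂ) + 1) else 0)
    (hdense : (Submodule.span ℂ (Set.range e)).topologicalClosure = ⊤)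
    (W : H →L[ℂ] H)
    (hW0 : ∀ n : ℕ, W (e (2 * n)) = e n)
    (hW1 : ∀ n : ℕ, W (e (2 * n + 1)) = 0)
    (φ ψ : ℂ → ℂ) (a b : ℕ → ℂ) (Cφ Cψ : ℝ)
    (hφ : ∀ z ∈ Metric.ball (0 : ℂ) 1, HasSum (fun n : ℕ => a n * z ^ n) (φ z))
    (hψ : ∀ z ∈ Metric.ball (0 : ℂ) 1, HasSum (fun n : ℕ => b n * z ^ n) (ψ z))
    (hφbd : ∀ z ∈ Metric.ball (0 : ℂ) 1, ‖φ z‖ ≤ Cφ)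
    (hψbd : ∀ z ∈ Metric.ball (0 : ℂ) 1, ‖ψ z‖ ≤ Cψ)
    (Tφ Tψ Tc : H →L[ℂ] H)
    (hTφ : ∀ k : ℕ, HasSum (fun n : ℕ => a n • e (n + k)) (Tφ (e k)))
    (hTψ : ∀ k : ℕ, HasSum (fun n : ℕ => b n • e (n + k)) (Tψ (e k)))
    (hTc0 : Tc (e 0) = 0)
    (hTc : ∀ k : ℕ, Tc (e (k + 1)) = (((k : ℂ) + 1) / ((k : ℂ) + 2)) • e k)
    (a₀ : ℝ) (ha₀ : a₀ ≠ 0)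
    (hcomm : (W.comp ((a₀ : ℂ) • Tc + Tφ)).comp (W.comp (Tc + Tψ))
      = (W.comp (Tc + Tψ)).comp (W.comp ((a₀ : ℂ) • Tc + Tφ))) :
    (∀ z ∈ Metric.ball (0 : ℂ) 1, φ z = (a₀ : ℂ) * ψ z) ∧
    (∀ z ∈ Metric.ball (0 : ℂ) 1,
      (a₀ : ℂ) * (starRingEnd ℂ) z + φ z
        = (a₀ : ℂ) * ((starRingEnd ℂ) z + ψ z)) := by
  classical
  -- `W` on basis vectors
  have hWe : ∀ j : ℕ, W (e j) = if Even j then e (j / 2) else 0 := by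
    intro j
    rcases Nat.even_or_odd j with hj | hj
    · obtain ⟨t, rfl⟩ := hj
      rw [if_pos ⟨t, rfl⟩]
      have h := hW0 t
      rw [two_mul] at h
      rw [h]
      congr 1
      omega
    · obtain ⟨t, rfl⟩ := hj
      rw [if_neg (by rw [Nat.even_iff]; omega)]
      exact hW1 t
  -- inner products with `W (e j)`
  have hinnWe : ∀ m j : ℕ, (inner ℂ (e m) (W (e j)) : ℂ)
      = if j = 2*m then 1/((m:ℂ)+1) else 0 := by
    intro m j
    rw [hWe]
    by_cases hj : Even j
    · obtain ⟨t, rfl⟩ := hj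
      rw [if_pos ⟨t, rfl⟩]
      have h2 : (t+t)/2 = t := by omega
      rw [h2, he]
      by_cases h : m = t
      · subst h
        rw [if_pos rfl, if_pos (by omega)]
      · rw [if_neg h, if_neg (by omega)]
    · rw [if_neg hj, inner_zero_right, if_neg (by rintro rfl; exact hj ⟨m, by omega⟩)]
  -- inner products with `W (Tc (e j))`
  have hWTcInner : ∀ m j : ℕ, (inner ℂ (e m) (W (Tc (e j))) : ℂ)
      = if j = 2*m+1 then ((2*(m:ℂ)+1)/(2*(m:ℂ)+2)) * (1/((m:ℂ)+1)) else 0 := by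
    intro m j
    match j with
    | 0 => rw [hTc0, map_zero, inner_zero_right, if_neg (by omega)]
    | t+1 =>
      rw [hTc t, map_smul, inner_smul_right, hinnWe]
      by_cases h : t = 2*m
      · subst h
        rw [if_pos rfl, if_pos rfl]
        push_cast
        ring
      · rw [if_neg h, if_neg (by omega), mul_zero]
  -- vector form of `W (Tc (e k))`
  have hWTc : ∀ k : ℕ, W (Tc (e k))
      = if Odd k then (((k:ℂ))/((k:ℂ)+1)) • e ((k-1)/2) else 0 := by
    intro k
    match k with
    | 0 => rw [hTc0, map_zero, if_neg (by simp)]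
    | t+1 =>
      rw [hTc t, map_smul, hWe]
      by_cases ht : Even t
      · rw [if_pos ht, if_pos (Even.add_one ht)]
        congr 1
        push_cast
        ring
      · rw [Nat.even_iff] at ht
        rw [if_neg (by rwa [Nat.even_iff]), smul_zero,
          if_neg (by rw [Nat.odd_iff]; omega)]
  -- inner products with `W (T (e k))` for a Toeplitz-type operator `T`
  have key1 : ∀ (T : H →L[ℂ] H) (co : ℕ → ℂ),
      (∀ k, HasSum (fun n => co n • e (n+k)) (T (e k))) →
      ∀ m k : ℕ, (inner ℂ (e m) (W (T (e k))) : ℂ)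
        = if k ≤ 2*m then co (2*m-k) * (1/((m:ℂ)+1)) else 0 := by
    intro T co hT m k
    have h1 := W.hasSum (hT k)
    simp only [map_smul] at h1
    have h2 := (innerSL ℂ (e m)).hasSum h1
    simp only [innerSL_apply_apply, inner_smul_right, hinnWe] at h2
    by_cases hk : k ≤ 2*m
    · rw [if_pos hk]
      have hfe : (fun n => co n * (if n + k = 2*m then 1/((m:ℂ)+1) else 0))
          = fun n => if n = 2*m - k then co (2*m-k) * (1/((m:ℂ)+1)) else 0 := by
        funext n
        by_cases h : n = 2*m-k
        · subst h
          rw [if_pos (by omega), if_pos rfl]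
        · rw [if_neg (by omega), if_neg h, mul_zero]
      rw [hfe] at h2
      exact h2.unique (hasSum_ite_eq _ _)
    · rw [if_neg hk]
      have hfe : (fun n => co n * (if n + k = 2*m then 1/((m:ℂ)+1) else 0))
          = fun _ => (0:ℂ) := by
        funext n
        rw [if_neg (by omega), mul_zero]
      rw [hfe] at h2
      exact h2.unique hasSum_zero
  -- inner products of basis vectors against a slant Toeplitz operator
  have key2 : ∀ (T : H →L[ℂ] H) (co : ℕ → ℂ),
      (∀ k, HasSum (fun n => co n • e (n+k)) (T (e k))) →
      ∀ (l : ℂ) (m j : ℕ),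
        (inner ℂ (e m) ((W.comp (l • Tc + T)) (e j)) : ℂ) = slantFc l co m j := by
    intro T co hT l m j
    have happ : (W.comp (l • Tc + T)) (e j) = l • W (Tc (e j)) + W (T (e j)) := by
      simp [ContinuousLinearMap.comp_apply, ContinuousLinearMap.add_apply,
        ContinuousLinearMap.smul_apply]
    rw [happ, inner_add_right, inner_smul_right, hWTcInner, key1 T co hT]
    unfold slantFc
    split_ifs with h1 h2 h2 <;> first | ring | (exfalso; omega)
  -- full expansion of `⟨e m, Op₁ (Op₂ (e k))⟩` for two slant Toeplitz operators
  have key3 : ∀ (T₁ : H →L[ℂ] H) (c₁ : ℕ → ℂ),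
      (∀ k, HasSum (fun n => c₁ n • e (n+k)) (T₁ (e k))) →
      ∀ (T₂ : H →L[ℂ] H) (c₂ : ℕ → ℂ),
      (∀ k, HasSum (fun n => c₂ n • e (n+k)) (T₂ (e k))) →
      ∀ (l₁ l₂ : ℂ) (m k : ℕ),
        (inner ℂ (e m) ((W.comp (l₁ • Tc + T₁)) ((W.comp (l₂ • Tc + T₂)) (e k))) : ℂ)
          = l₂ * (if Odd k then ((k:ℂ)/((k:ℂ)+1)) * slantFc l₁ c₁ m ((k-1)/2) else 0)
            + ∑ j ∈ Finset.range (4*m+3),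
                c₂ j * (if Even (j+k) then slantFc l₁ c₁ m ((j+k)/2) else 0) := by
    intro T₁ c₁ hT₁ T₂ c₂ hT₂ l₁ l₂ m k
    -- inner of Op₁ applied to W basis vectors
    have hOpWe : ∀ j : ℕ, (inner ℂ (e m) ((W.comp (l₁ • Tc + T₁)) (W (e j))) : ℂ)
        = if Even j then slantFc l₁ c₁ m (j/2) else 0 := by
      intro j
      rw [hWe]
      by_cases hj : Even j
      · rw [if_pos hj, if_pos hj, key2 T₁ c₁ hT₁]
      · rw [if_neg hj, if_neg hj, map_zero, inner_zero_right]
    -- decompose the argument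
    have harg : (W.comp (l₂ • Tc + T₂)) (e k) = l₂ • W (Tc (e k)) + W (T₂ (e k)) := by
      simp [ContinuousLinearMap.comp_apply, ContinuousLinearMap.add_apply,
        ContinuousLinearMap.smul_apply]
    rw [harg, map_add, map_smul, inner_add_right, inner_smul_right]
    congr 1
    · -- the `W (Tc (e k))` part
      rw [hWTc]
      by_cases hk : Odd k
      · rw [if_pos hk, if_pos hk, map_smul, inner_smul_right, key2 T₁ c₁ hT₁]
      · rw [if_neg hk, if_neg hk, map_zero, inner_zero_right, mul_zero]
    · -- the `W (T₂ (e k))` part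
      have h1 := W.hasSum (hT₂ k)
      simp only [map_smul] at h1
      have h2 := (W.comp (l₁ • Tc + T₁)).hasSum h1
      simp only [map_smul] at h2
      have h3 := (innerSL ℂ (e m)).hasSum h2
      simp only [innerSL_apply_apply, inner_smul_right] at h3
      have hfe : (fun n => c₂ n * (inner ℂ (e m) ((W.comp (l₁ • Tc + T₁)) (W (e (n+k)))) : ℂ))
          = fun n => c₂ n * (if Even (n+k) then slantFc l₁ c₁ m ((n+k)/2) else 0) := by
        funext n
        rw [hOpWe]
      rw [hfe] at h3
      refine h3.unique (hasSum_sum_of_ne_finset_zero ?_)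
      intro n hn
      rw [Finset.mem_range, not_lt] at hn
      by_cases hp : Even (n+k)
      · rw [if_pos hp]
        obtain ⟨r, hr⟩ := hp
        unfold slantFc
        rw [if_neg (by omega), if_neg (by omega)]
        simp
      · rw [if_neg hp, mul_zero]
  -- the coefficient identity, by strong induction
  have hcoef : ∀ n : ℕ, a n = (a₀:ℂ) * b n := by
    intro n
    induction n using Nat.strong_induction_on with
    | _ n IH =>
      have hB : W.comp (Tc + Tψ) = W.comp ((1:ℂ) • Tc + Tψ) := by rw [one_smul]
      have hcomm' := hcomm
      rw [hB] at hcomm'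
      have heq : (inner ℂ (e n) ((W.comp ((a₀:ℂ) • Tc + Tφ))
            ((W.comp ((1:ℂ) • Tc + Tψ)) (e (3*n+2)))) : ℂ)
          = inner ℂ (e n) ((W.comp ((1:ℂ) • Tc + Tψ))
            ((W.comp ((a₀:ℂ) • Tc + Tφ)) (e (3*n+2)))) := by
        have h := ContinuousLinearMap.ext_iff.mp hcomm' (e (3*n+2))
        rw [ContinuousLinearMap.comp_apply, ContinuousLinearMap.comp_apply] at h
        exact congrArg (fun v => (inner ℂ (e n) v : ℂ)) h
      rw [key3 Tφ a hTφ Tψ b hTψ (a₀:ℂ) 1 n (3*n+2),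
          key3 Tψ b hTψ Tφ a hTφ 1 (a₀:ℂ) n (3*n+2)] at heq
      -- the odd (Tc) boundary terms agree thanks to the induction hypothesis
      have hodd : (1:ℂ) * (if Odd (3*n+2) then (((3*n+2:ℕ):ℂ)/(((3*n+2:ℕ):ℂ)+1))
              * slantFc (a₀:ℂ) a n (((3*n+2)-1)/2) else 0)
          = (a₀:ℂ) * (if Odd (3*n+2) then (((3*n+2:ℕ):ℂ)/(((3*n+2:ℕ):ℂ)+1))
              * slantFc 1 b n (((3*n+2)-1)/2) else 0) := by
        by_cases hk : Odd (3*n+2)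
        · obtain ⟨p, hp⟩ := hk
          have h1 : ¬((3*n+2-1)/2 = 2*n+1) := by omega
          have h2 : (3*n+2-1)/2 ≤ 2*n := by omega
          have hFc : slantFc (a₀:ℂ) a n (((3*n+2)-1)/2)
              = (a₀:ℂ) * slantFc 1 b n (((3*n+2)-1)/2) := by
            unfold slantFc
            simp only [if_neg h1, if_pos h2]
            rw [IH (2*n - (3*n+2-1)/2) (by omega)]
            ring
          rw [if_pos ⟨p, hp⟩, if_pos ⟨p, hp⟩, hFc]
          ring
        · rw [if_neg hk, if_neg hk, mul_zero, mul_zero]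
      -- subtract and isolate the `j = n` term of the sums
      have hsub : ∑ j ∈ Finset.range (4*n+3),
            (b j * (if Even (j+(3*n+2)) then slantFc (a₀:ℂ) a n ((j+(3*n+2))/2) else 0)
             - a j * (if Even (j+(3*n+2)) then slantFc 1 b n ((j+(3*n+2))/2) else 0))
          = b n * (if Even (n+(3*n+2)) then slantFc (a₀:ℂ) a n ((n+(3*n+2))/2) else 0)
            - a n * (if Even (n+(3*n+2)) then slantFc 1 b n ((n+(3*n+2))/2) else 0) := by
        refine Finset.sum_eq_single n ?_ ?_
        · intro j _ hjn
          by_cases hp : Even (j+(3*n+2))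
          · obtain ⟨r, hr⟩ := hp
            have hq1 : ¬((j+(3*n+2))/2 = 2*n+1) := by omega
            rw [if_pos ⟨r, hr⟩, if_pos ⟨r, hr⟩]
            by_cases hle : (j+(3*n+2))/2 ≤ 2*n
            · have hjn' : j < n := by omega
              have hq2 : 2*n - (j+(3*n+2))/2 < n := by omega
              unfold slantFc
              simp only [if_neg hq1, if_pos hle]
              rw [IH j hjn', IH _ hq2]
              ring
            · unfold slantFc
              simp only [if_neg hq1, if_neg hle]
              ring
          · rw [if_neg hp, if_neg hp, mul_zero, mul_zero, sub_zero]
        · intro hmem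
          exact absurd (Finset.mem_range.mpr (by omega)) hmem
      have hsplit : ∑ j ∈ Finset.range (4*n+3),
            (b j * (if Even (j+(3*n+2)) then slantFc (a₀:ℂ) a n ((j+(3*n+2))/2) else 0)
             - a j * (if Even (j+(3*n+2)) then slantFc 1 b n ((j+(3*n+2))/2) else 0))
          = ∑ j ∈ Finset.range (4*n+3),
              b j * (if Even (j+(3*n+2)) then slantFc (a₀:ℂ) a n ((j+(3*n+2))/2) else 0)
            - ∑ j ∈ Finset.range (4*n+3),
              a j * (if Even (j+(3*n+2)) then slantFc 1 b n ((j+(3*n+2))/2) else 0) :=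
        Finset.sum_sub_distrib _ _
      have hnn : b n * (if Even (n+(3*n+2)) then slantFc (a₀:ℂ) a n ((n+(3*n+2))/2) else 0)
          - a n * (if Even (n+(3*n+2)) then slantFc 1 b n ((n+(3*n+2))/2) else 0) = 0 := by
        rw [hsub.symm, hsplit]
        have := heq
        -- heq : odd_L + sumL = odd_R + sumR ; hodd : odd_L = odd_R
        rw [hodd] at this
        linear_combination this
      -- evaluate the `j = n` term
      have hev : Even (n+(3*n+2)) := ⟨2*n+1, by omega⟩
      have hd2 : (n+(3*n+2))/2 = 2*n+1 := by omega
      rw [if_pos hev, if_pos hev, hd2] at hnn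
      unfold slantFc at hnn
      have hng : ¬(2*n+1 ≤ 2*n) := by omega
      have hee : 2*n+1 = 2*n+1 := rfl
      rw [if_pos hee] at hnn
      rw [if_pos hee] at hnn
      rw [if_neg hng] at hnn
      rw [if_neg hng] at hnn
      have hC : ((2*(n:ℂ)+1)/(2*(n:ℂ)+2)) * (1/((n:ℂ)+1)) ≠ 0 := by
        have h1 : (2*(n:ℂ)+1) ≠ 0 := by
          have : ((2*n+1:ℕ):ℂ) ≠ 0 := Nat.cast_ne_zero.mpr (by omega)
          push_cast at this
          convert this using 2 <;> push_cast <;> ring_nf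
        have h2 : (2*(n:ℂ)+2) ≠ 0 := by
          have : ((2*n+2:ℕ):ℂ) ≠ 0 := Nat.cast_ne_zero.mpr (by omega)
          push_cast at this
          convert this using 2 <;> push_cast <;> ring_nf
        have h3 : ((n:ℂ)+1) ≠ 0 := by
          have : ((n+1:ℕ):ℂ) ≠ 0 := Nat.cast_ne_zero.mpr (by omega)
          push_cast at this
          convert this using 2
        exact mul_ne_zero (div_ne_zero h1 h2) (one_div_ne_zero h3)
      have hfin : ((a₀:ℂ) * b n - a n) * (((2*(n:ℂ)+1)/(2*(n:ℂ)+2)) * (1/((n:ℂ)+1))) = 0 := by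
        linear_combination hnn
      rcases mul_eq_zero.mp hfin with h | h
      · exact (sub_eq_zero.mp h).symm
      · exact absurd h hC
  -- from the coefficient identity to the function identities
  have hmain : ∀ z ∈ Metric.ball (0 : ℂ) 1, φ z = (a₀ : ℂ) * ψ z := by
    intro z hz
    have h1 := hφ z hz
    have h2 := (hψ z hz).mul_left (a₀:ℂ)
    have hfe : (fun n : ℕ => a n * z ^ n) = fun n : ℕ => (a₀:ℂ) * (b n * z ^ n) := by
      funext n
      rw [hcoef n]
      ring
    rw [hfe] at h1
    exact h1.unique h2
  refine ⟨hmain, ?_⟩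
  intro z hz
  rw [hmain z hz]
  ring
end

section
/- The slant Toeplitz operators B_{z + z̄^2} and B_{z + z̄} on the Bergman space do not commute: B_{z + z̄^2} B_{z + z̄} ≠ B_{z + z̄} B_{z + z̄^2}. -/
/-- The slant Toeplitz operators `B_{z+z̄²} = W(T_z + T_{z̄²})` and
`B_{z+z̄} = W(T_z + T_{z̄})` on the Bergman space (modeled as a complex
Hilbert space `H` with monomials `e n = z^n`, `⟪z^j, z^k⟫ = δ_{jk}/(j+1)`,
dense span; `W` the slant operator and `T_z, T_{z̄}, T_{z̄²}` the Toeplitz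
operators characterized on monomials) do not commute. -/
theorem slant_toeplitz_z_zbar_sq_not_commute
    {H : Type*} [NormedAddCommGroup H] [InnerProductSpace ℂ H] [CompleteSpace H]
    (e : ℕ → H)
    (he : ∀ j k : ℕ, (inner ℂ (e j) (e k) : ℂ) = if j = k then 1 / ((j : ℂ) + 1) else 0)
    (hdense : (Submodule.span ℂ (Set.range e)).topologicalClosure = ⊤)
    (W : H →L[ℂ] H)
    (hW0 : ∀ n : ℕ, W (e (2 * n)) = e n)
    (hW1 : ∀ n : ℕ, W (e (2 * n + 1)) = 0)
    (Tz Tc1 Tc2 : H →L[ℂ] H)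
    (hTz : ∀ k : ℕ, Tz (e k) = e (k + 1))
    (hTc1 : ∀ k : ℕ, Tc1 (e k)
      = if 1 ≤ k then (((k : ℂ)) / ((k : ℂ) + 1)) • e (k - 1) else 0)
    (hTc2 : ∀ k : ℕ, Tc2 (e k)
      = if 2 ≤ k then (((k : ℂ) - 1) / ((k : ℂ) + 1)) • e (k - 2) else 0) :
    (W.comp (Tz + Tc2)).comp (W.comp (Tz + Tc1))
      ≠ (W.comp (Tz + Tc1)).comp (W.comp (Tz + Tc2)) := by
  intro h
  -- key values
  have hW2 : W (e 2) = e 1 := by have := hW0 1; norm_num at this; exact this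
  have hW1' : W (e 1) = 0 := by have := hW1 0; norm_num at this; exact this
  have hWe0 : W (e 0) = e 0 := by have := hW0 0; norm_num at this; exact this
  have hTc1_1 : Tc1 (e 1) = (2⁻¹ : ℂ) • e 0 := by
    have := hTc1 1; norm_num at this; convert this using 2; norm_num
  have hTc1_0 : Tc1 (e 0) = 0 := by have := hTc1 0; norm_num at this; exact this
  have hTc2_0 : Tc2 (e 0) = 0 := by have := hTc2 0; norm_num at this; exact this
  have hTc2_1 : Tc2 (e 1) = 0 := by have := hTc2 1; norm_num at this; exact this
  have h1 := congrArg (fun T : H →L[ℂ] H => T (e 1)) h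
  simp only [ContinuousLinearMap.comp_apply, ContinuousLinearMap.add_apply] at h1
  simp only [map_add, map_smul, map_zero, hTz, hTc1_1, hTc1_0, hTc2_0, hTc2_1,
    hW2, hWe0, hW1', smul_zero, add_zero, zero_add, Nat.reduceAdd] at h1
  have h2 : (inner ℂ (e 0) (e 1 + (2⁻¹ : ℂ) • e 0) : ℂ) = inner ℂ (e 0) (e 1) := by
    rw [← h1]
  rw [inner_add_right, inner_smul_right, he 0 0, he 0 1] at h2
  norm_num at h2
end

section
/- The slant Toeplitz operators B_{z + z̄^3} and B_{z + z̄} on the Bergman space do not commute: B_{z + z̄^3} B_{z + z̄} ≠ B_{z + z̄} B_{z + z̄^3}. -/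
/-- The slant Toeplitz operators `B_{z+z̄³} = W(T_z + T_{z̄³})` and
`B_{z+z̄} = W(T_z + T_{z̄})` on the Bergman space (modeled as a complex
Hilbert space `H` with monomials `e n = z^n`, `⟪z^j, z^k⟫ = δ_{jk}/(j+1)`,
dense span; `W` the slant operator and `T_z, T_{z̄}, T_{z̄³}` the Toeplitz
operators characterized on monomials) do not commute. -/
theorem slant_toeplitz_z_zbar_cube_not_commute
    {H : Type*} [NormedAddCommGroup H] [InnerProductSpace ℂ H] [CompleteSpace H]
    (e : ℕ → H)
    (he : ∀ j k : ℕ, (inner ℂ (e j) (e k) : ℂ) = if j = k then 1 / ((j : ℂ) + 1) else 0)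
    (hdense : (Submodule.span ℂ (Set.range e)).topologicalClosure = ⊤)
    (W : H →L[ℂ] H)
    (hW0 : ∀ n : ℕ, W (e (2 * n)) = e n)
    (hW1 : ∀ n : ℕ, W (e (2 * n + 1)) = 0)
    (Tz Tc1 Tc3 : H →L[ℂ] H)
    (hTz : ∀ k : ℕ, Tz (e k) = e (k + 1))
    (hTc1 : ∀ k : ℕ, Tc1 (e k)
      = if 1 ≤ k then (((k : ℂ)) / ((k : ℂ) + 1)) • e (k - 1) else 0)
    (hTc3 : ∀ k : ℕ, Tc3 (e k)
      = if 3 ≤ k then (((k : ℂ) - 2) / ((k : ℂ) + 1)) • e (k - 3) else 0) :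
    (W.comp (Tz + Tc3)).comp (W.comp (Tz + Tc1))
      ≠ (W.comp (Tz + Tc1)).comp (W.comp (Tz + Tc3)) := by
  intro h
  have hWe2 : W (e 2) = e 1 := by simpa using hW0 1
  have hWe0 : W (e 0) = e 0 := by simpa using hW0 0
  have hWe4 : W (e 4) = e 2 := by simpa using hW0 2
  -- B2 (e 1) = e 1 + (1/2) • e 0
  have hB2 : W ((Tz + Tc1) (e 1)) = e 1 + ((1:ℂ)/2) • e 0 := by
    simp [hTz 1, hTc1 1, map_add, map_smul, hWe2, hWe0]
    norm_num
  -- B1 (e 1) = e 1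
  have hB1 : W ((Tz + Tc3) (e 1)) = e 1 := by
    simp [hTz 1, hTc3 1, hWe2]
  have hB1e0 : W ((Tz + Tc3) (e 0)) = 0 := by
    have := hW1 0
    simp [hTz 0, hTc3 0] at this ⊢
    simpa using this
  have h1 := congrArg (fun T : H →L[ℂ] H => T (e 1)) h
  simp only [ContinuousLinearMap.comp_apply] at h1
  rw [hB1, hB2] at h1
  rw [map_add, map_smul, map_add, map_smul, hB1, hB1e0] at h1
  -- h1 : e 1 + (1/2) • 0 = e 1 + (1/2) • e 0
  have he0 : e 0 = 0 := by
    have : ((1:ℂ)/2) • e 0 = 0 := by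
      have := h1
      simpa [add_eq_left] using this.symm
    simpa using smul_eq_zero.mp this
  have := he 0 0
  rw [he0] at this
  simp at this
end

section
/- Let p be an analytic polynomial of degree N ≥ 1 and let φ, ψ be bounded analytic functions on the unit disk. Then the slant Toeplitz operators B_{p̄+φ} and B_{p̄+ψ} on the Bergman space commute if and only if φ = ψ. -/
open scoped InnerProductSpace NNReal ENNReal
set_option linter.unusedSectionVars false

namespace SlantAux

noncomputable def g (N : ℕ) (c u : ℕ → ℂ) (i m : ℕ) : ℂ :=
  (if 2*m ≤ i ∧ i ≤ 2*m + N then c (i - 2*m) * (2*(m:ℂ)+1) / (((i:ℂ)+1)*((m:ℂ)+1)) else 0)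
  + (if i ≤ 2*m then u (2*m - i) / ((m:ℂ)+1) else 0)

noncomputable def M (N : ℕ) (c u₁ u₂ : ℕ → ℂ) (k m : ℕ) : ℂ :=
  (∑ j ∈ Finset.range (N+1), if j ≤ k ∧ Even (k - j) then
      c j * (((k:ℂ)+1-(j:ℂ))/((k:ℂ)+1)) * g N c u₁ ((k-j)/2) m else 0)
  + (∑ n ∈ Finset.range (4*m+2*N+1), if Even (n + k) then u₂ n * g N c u₁ ((n+k)/2) m else 0)

lemma g_zero (N : ℕ) (c u : ℕ → ℂ) {i m : ℕ} (h : 2*m + N < i) : g N c u i m = 0 := by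
  unfold g
  rw [if_neg (by omega), if_neg (by omega), add_zero]

variable {H : Type*} [NormedAddCommGroup H] [InnerProductSpace ℂ H] [CompleteSpace H]
  {e : ℕ → H} {W : H →L[ℂ] H}

lemma Wapp (hW0 : ∀ n : ℕ, W (e (2 * n)) = e n) (hW1 : ∀ n : ℕ, W (e (2 * n + 1)) = 0)
    (r : ℕ) : W (e r) = if Even r then e (r/2) else 0 := by
  rcases Nat.even_or_odd r with ⟨q, hq⟩ | ⟨q, hq⟩
  · subst hq
    rw [if_pos ⟨q, rfl⟩]
    have : q + q = 2 * q := by ring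
    rw [this, hW0]
    congr 1
    omega
  · subst hq
    rw [if_neg (by simp [Nat.even_iff, Nat.add_mul_mod_self_left]), hW1]

lemma inner_We (he : ∀ j k : ℕ, (inner ℂ (e j) (e k) : ℂ) = if j = k then 1 / ((j : ℂ) + 1) else 0)
    (hW0 : ∀ n : ℕ, W (e (2 * n)) = e n) (hW1 : ∀ n : ℕ, W (e (2 * n + 1)) = 0)
    (m r : ℕ) : (inner ℂ (e m) (W (e r)) : ℂ) = if r = 2*m then 1/((m:ℂ)+1) else 0 := by
  rw [Wapp hW0 hW1]
  by_cases h : Even r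
  · rw [if_pos h, he]
    obtain ⟨t, ht⟩ := h
    by_cases h2 : m = r / 2
    · rw [if_pos h2, if_pos (by omega), h2]
    · rw [if_neg h2, if_neg (by omega)]
  · rw [if_neg h, inner_zero_right, eq_comm, if_neg (by rintro rfl; exact h ⟨m, by ring⟩)]

section Entries

variable (he : ∀ j k : ℕ, (inner ℂ (e j) (e k) : ℂ) = if j = k then 1 / ((j : ℂ) + 1) else 0)
  (hW0 : ∀ n : ℕ, W (e (2 * n)) = e n) (hW1 : ∀ n : ℕ, W (e (2 * n + 1)) = 0)
  {N : ℕ} {c : ℕ → ℂ} {Tp : H →L[ℂ] H}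
  (hTp : ∀ k : ℕ, Tp (e k) = ∑ j ∈ Finset.range (N + 1),
      (if j ≤ k then
        (c j * (((k : ℂ) + 1 - (j : ℂ)) / ((k : ℂ) + 1))) • e (k - j) else 0))

include he hW0 hW1 hTp in
lemma entryA (i m : ℕ) : (inner ℂ (e m) (W (Tp (e i))) : ℂ) =
    if 2*m ≤ i ∧ i ≤ 2*m + N then c (i - 2*m) * (2*(m:ℂ)+1) / (((i:ℂ)+1)*((m:ℂ)+1)) else 0 := by
  rw [hTp i, map_sum, inner_sum]
  have step : ∀ j ∈ Finset.range (N+1),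
      (inner ℂ (e m) (W (if j ≤ i then
        (c j * (((i : ℂ) + 1 - (j : ℂ)) / ((i : ℂ) + 1))) • e (i - j) else 0)) : ℂ)
      = if j = i - 2*m then
          (if 2*m ≤ i ∧ i ≤ 2*m + N then
            c (i - 2*m) * (2*(m:ℂ)+1) / (((i:ℂ)+1)*((m:ℂ)+1)) else 0) else 0 := by
    intro j hj
    rw [Finset.mem_range] at hj
    rw [apply_ite W, map_zero, map_smul, apply_ite (fun y => (inner ℂ (e m) y : ℂ)),
      inner_zero_right, inner_smul_right, inner_We he hW0 hW1]
    by_cases h1 : j ≤ i ∧ i - j = 2*m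
    · rw [if_pos h1.1, if_pos h1.2, if_pos (by omega), if_pos (by omega)]
      have hjc : ((i - 2*m : ℕ) : ℂ) = (i : ℂ) - 2*m := by
        push_cast [Nat.cast_sub (show 2*m ≤ i by omega)]
        ring
      have hje : j = i - 2*m := by omega
      subst hje
      rw [hjc]
      have hi1 : ((i:ℂ)+1) ≠ 0 := Nat.cast_add_one_ne_zero i
      have hm1 : ((m:ℂ)+1) ≠ 0 := Nat.cast_add_one_ne_zero m
      field_simp
      ring
    · rcases Classical.em (j ≤ i) with h2 | h2
      · rw [if_pos h2, if_neg (show ¬ i - j = 2*m by omega), mul_zero]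
        by_cases h3 : j = i - 2*m
        · rw [if_pos h3, if_neg (show ¬ (2*m ≤ i ∧ i ≤ 2*m + N) by omega)]
        · rw [if_neg h3]
      · rw [if_neg h2, if_neg (show ¬ j = i - 2*m by omega)]
  rw [Finset.sum_congr rfl step, Finset.sum_ite_eq' (Finset.range (N+1))]
  by_cases hmem : i - 2*m ∈ Finset.range (N+1)
  · rw [if_pos hmem]
  · rw [if_neg hmem, Finset.mem_range] at *
    rw [eq_comm, if_neg (by omega)]


include he hW0 hW1 in
lemma entryB (T : H →L[ℂ] H) (u : ℕ → ℂ)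
    (hT : ∀ k : ℕ, HasSum (fun n : ℕ => u n • e (n + k)) (T (e k))) (i m : ℕ) :
    (inner ℂ (e m) (W (T (e i))) : ℂ) = if i ≤ 2*m then u (2*m - i) / ((m:ℂ)+1) else 0 := by
  have h := ((innerSL ℂ (e m)).comp W).hasSum (hT i)
  simp only [ContinuousLinearMap.coe_comp', Function.comp_apply, map_smul, smul_eq_mul,
    innerSL_apply_apply] at h
  simp only [inner_We he hW0 hW1] at h
  by_cases hi : i ≤ 2*m
  · have heq : (fun n : ℕ => u n * (if n + i = 2*m then 1/((m:ℂ)+1) else 0))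
        = fun n : ℕ => if n = 2*m - i then u (2*m - i) / ((m:ℂ)+1) else 0 := by
      funext n
      by_cases hn : n = 2*m - i
      · subst hn
        rw [if_pos (by omega), if_pos rfl, mul_one_div]
      · rw [if_neg (by omega), mul_zero, if_neg hn]
    rw [heq] at h
    rw [if_pos hi]
    exact h.unique (hasSum_ite_eq (2*m - i) _)
  · have heq : (fun n : ℕ => u n * (if n + i = 2*m then 1/((m:ℂ)+1) else 0))
        = fun _ : ℕ => (0 : ℂ) := by
      funext n
      rw [if_neg (by omega), mul_zero]
    rw [heq] at h
    rw [if_neg hi]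
    exact h.unique hasSum_zero

include he hW0 hW1 hTp in
lemma entry1 (T : H →L[ℂ] H) (u : ℕ → ℂ)
    (hT : ∀ k : ℕ, HasSum (fun n : ℕ => u n • e (n + k)) (T (e k))) (i m : ℕ) :
    (inner ℂ (e m) ((W.comp (Tp + T)) (e i)) : ℂ) = g N c u i m := by
  have hs : (W.comp (Tp + T)) (e i) = W (Tp (e i)) + W (T (e i)) := by
    simp [ContinuousLinearMap.comp_apply, ContinuousLinearMap.add_apply, map_add]
  rw [hs, inner_add_right, entryA he hW0 hW1 hTp, entryB he hW0 hW1 T u hT, g]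

include he hW0 hW1 hTp in
lemma entry2 (T₁ T₂ : H →L[ℂ] H) (u₁ u₂ : ℕ → ℂ)
    (hT₁ : ∀ k : ℕ, HasSum (fun n : ℕ => u₁ n • e (n + k)) (T₁ (e k)))
    (hT₂ : ∀ k : ℕ, HasSum (fun n : ℕ => u₂ n • e (n + k)) (T₂ (e k)))
    (k m : ℕ) :
    (inner ℂ (e m) (((W.comp (Tp + T₁)).comp (W.comp (Tp + T₂))) (e k)) : ℂ)
      = M N c u₁ u₂ k m := by
  set B₁ := W.comp (Tp + T₁) with hB₁
  have hgB : ∀ q, (inner ℂ (e m) (B₁ (e q)) : ℂ) = g N c u₁ q m :=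
    fun q => entry1 he hW0 hW1 hTp T₁ u₁ hT₁ q m
  have hsplit : ((B₁.comp (W.comp (Tp + T₂))) (e k)) = B₁ (W (Tp (e k))) + B₁ (W (T₂ (e k))) := by
    simp [ContinuousLinearMap.comp_apply, ContinuousLinearMap.add_apply, map_add]
  rw [hsplit, inner_add_right]
  have part1 : (inner ℂ (e m) (B₁ (W (Tp (e k)))) : ℂ)
      = ∑ j ∈ Finset.range (N+1), if j ≤ k ∧ Even (k - j) then
          c j * (((k:ℂ)+1-(j:ℂ))/((k:ℂ)+1)) * g N c u₁ ((k-j)/2) m else 0 := by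
    rw [hTp k, map_sum, map_sum, inner_sum]
    refine Finset.sum_congr rfl fun j hj => ?_
    simp only [apply_ite W, map_zero, map_smul]
    simp only [Wapp hW0 hW1]
    simp only [smul_ite, smul_zero, apply_ite B₁, map_zero, map_smul,
      apply_ite (fun y : H => (inner ℂ (e m) y : ℂ)), inner_zero_right, inner_smul_right,
      smul_eq_mul]
    simp only [hgB, ite_and]
  have part2 : (inner ℂ (e m) (B₁ (W (T₂ (e k)))) : ℂ)
      = ∑ n ∈ Finset.range (4*m+2*N+1), if Even (n + k) then
          u₂ n * g N c u₁ ((n+k)/2) m else 0 := by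
    have h := ((innerSL ℂ (e m)).comp (B₁.comp W)).hasSum (hT₂ k)
    simp only [ContinuousLinearMap.coe_comp', Function.comp_apply, map_smul, smul_eq_mul,
      innerSL_apply_apply] at h
    have heq : (fun n : ℕ => u₂ n * (inner ℂ (e m) (B₁ (W (e (n+k)))) : ℂ))
        = fun n : ℕ => if Even (n + k) then u₂ n * g N c u₁ ((n+k)/2) m else 0 := by
      funext n
      rw [Wapp hW0 hW1]
      by_cases hn : Even (n + k)
      · rw [if_pos hn, if_pos hn, hgB]
      · rw [if_neg hn, if_neg hn, map_zero, inner_zero_right, mul_zero]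
    rw [heq] at h
    refine h.unique (hasSum_sum_of_ne_finset_zero fun n hn => ?_)
    rw [Finset.mem_range, not_lt] at hn
    by_cases hev : Even (n + k)
    · rw [if_pos hev]
      have hq : 2*m + N < (n+k)/2 := by
        obtain ⟨t, ht⟩ := hev
        omega
      rw [g_zero N c u₁ hq, mul_zero]
    · rw [if_neg hev]
  rw [part1, part2, M]

end Entries

lemma coeff_eq {N : ℕ} (hN : 1 ≤ N) {c : ℕ → ℂ} (hcN : c N ≠ 0) {a b : ℕ → ℂ}
    (hM : ∀ k m : ℕ, M N c a b k m = M N c b a k m) : ∀ n, a n = b n := by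
  intro n
  induction n using Nat.strong_induction_on with
  | _ n IH =>
  have key := hM (3*n + 2*N) n
  set k := 3*n + 2*N with hk
  set C : ℂ := c N * (2*(n:ℂ)+1) / ((((2*n+N : ℕ):ℂ)+1)*((n:ℂ)+1)) with hC
  have h1 : (∑ j ∈ Finset.range (N+1), if j ≤ k ∧ Even (k - j) then
        c j * (((k:ℂ)+1-(j:ℂ))/((k:ℂ)+1)) * g N c a ((k-j)/2) n else 0)
      = (∑ j ∈ Finset.range (N+1), if j ≤ k ∧ Even (k - j) then
        c j * (((k:ℂ)+1-(j:ℂ))/((k:ℂ)+1)) * g N c b ((k-j)/2) n else 0) := by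
    refine Finset.sum_congr rfl fun j hj => ?_
    rw [Finset.mem_range] at hj
    by_cases hc1 : j ≤ k ∧ Even (k - j)
    · rw [if_pos hc1, if_pos hc1]
      obtain ⟨t, ht⟩ := hc1.2
      have hq : (k-j)/2 = t := by omega
      rw [hq]
      unfold g
      congr 1
      by_cases h2 : t ≤ 2*n
      · rw [if_pos h2, if_pos h2, IH (2*n - t) (by omega)]
      · rw [if_neg h2, if_neg h2]
    · rw [if_neg hc1, if_neg hc1]
  have h2 : (∑ n' ∈ Finset.range (4*n+2*N+1), if Even (n' + k) then
        b n' * g N c a ((n'+k)/2) n else 0)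
      - (∑ n' ∈ Finset.range (4*n+2*N+1), if Even (n' + k) then
        a n' * g N c b ((n'+k)/2) n else 0)
      = (b n - a n) * C := by
    rw [← Finset.sum_sub_distrib]
    have step : ∀ n' ∈ Finset.range (4*n+2*N+1),
        ((if Even (n' + k) then b n' * g N c a ((n'+k)/2) n else 0)
          - (if Even (n' + k) then a n' * g N c b ((n'+k)/2) n else 0))
        = if n' = n then (b n - a n) * C else 0 := by
      intro n' hn'
      rw [Finset.mem_range] at hn'
      by_cases hev : Even (n' + k)
      · obtain ⟨t, ht⟩ := hev
        have hq : (n'+k)/2 = t := by omega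
        rw [if_pos ⟨t, ht⟩, if_pos ⟨t, ht⟩, hq]
        by_cases hne : n' = n
        · rw [if_pos hne, hne]
          have h1t : 2*n ≤ t ∧ t ≤ 2*n + N := by omega
          have h2t : ¬ (t ≤ 2*n) := by omega
          unfold g
          rw [if_pos h1t, if_neg h2t, if_neg h2t]
          have hidx : t - 2*n = N := by omega
          have htc : (t:ℂ) = ((2*n+N : ℕ) : ℂ) := by
            norm_cast
            omega
          rw [hidx, htc, hC]
          ring
        · rw [if_neg hne]
          unfold g
          by_cases hP : 2*n ≤ t ∧ t ≤ 2*n + N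
          · rw [if_pos hP]
            by_cases hQ : t ≤ 2*n
            · rw [if_pos hQ, if_pos hQ, IH n' (by omega), IH (2*n - t) (by omega)]
              ring
            · rw [if_neg hQ, if_neg hQ, IH n' (by omega)]
              ring
          · rw [if_neg hP]
            by_cases hQ : t ≤ 2*n
            · rw [if_pos hQ, if_pos hQ, IH n' (by omega), IH (2*n - t) (by omega)]
              ring
            · rw [if_neg hQ, if_neg hQ]
              ring
      · rw [if_neg hev, if_neg hev, sub_zero,
          if_neg (show ¬ n' = n by intro h'; exact hev ⟨2*n + N, by omega⟩)]
    rw [Finset.sum_congr rfl step,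
      Finset.sum_ite_eq' (Finset.range (4*n+2*N+1)) n (fun _ => (b n - a n) * C),
      if_pos (Finset.mem_range.mpr (by omega))]
  rw [M, M, h1] at key
  have h3 : (b n - a n) * C = 0 := by
    rw [← h2, add_left_cancel key, sub_self]
  have hCne : C ≠ 0 := by
    rw [hC]
    apply div_ne_zero
    · apply mul_ne_zero hcN
      intro h
      have : ((2*n+1 : ℕ) : ℂ) = 0 := by push_cast; linear_combination h
      exact Nat.cast_ne_zero.mpr (by omega) this
    · exact mul_ne_zero (Nat.cast_add_one_ne_zero (2*n+N)) (Nat.cast_add_one_ne_zero n)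
  have := (mul_eq_zero.mp h3).resolve_right hCne
  linear_combination -this


end SlantAux


/-- Main theorem: let `p(z) = Σ_{j=0}^N c_j z^j` be an analytic polynomial of
degree `N ≥ 1` (so `c N ≠ 0`) and `φ, ψ` bounded analytic functions on the
unit disk with Taylor coefficients `a`, `b`.  On the Bergman space (modeled as
a complex Hilbert space `H` with monomials `e n = z^n`,
`⟪z^j, z^k⟫ = δ_{jk}/(j+1)`, dense span), with slant operator `W` and Toeplitz
operators `Tp = T_{p̄}`, `Tφ = T_φ`, `Tψ = T_ψ` characterized on monomials,
the slant Toeplitz operators `B_{p̄+φ} = W(T_{p̄} + T_φ)` and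
`B_{p̄+ψ} = W(T_{p̄} + T_ψ)` commute if and only if `φ = ψ`. -/
theorem commuting_slant_toeplitz_harmonic
    {H : Type*} [NormedAddCommGroup H] [InnerProductSpace ℂ H] [CompleteSpace H]
    (e : ℕ → H)
    (he : ∀ j k : ℕ, (inner ℂ (e j) (e k) : ℂ) = if j = k then 1 / ((j : ℂ) + 1) else 0)
    (hdense : (Submodule.span ℂ (Set.range e)).topologicalClosure = ⊤)
    (W : H →L[ℂ] H)
    (hW0 : ∀ n : ℕ, W (e (2 * n)) = e n)
    (hW1 : ∀ n : ℕ, W (e (2 * n + 1)) = 0)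
    (N : ℕ) (hN : 1 ≤ N) (c : ℕ → ℂ) (hcN : c N ≠ 0)
    (φ ψ : ℂ → ℂ) (a b : ℕ → ℂ) (Cφ Cψ : ℝ)
    (hφ : ∀ z ∈ Metric.ball (0 : ℂ) 1, HasSum (fun n : ℕ => a n * z ^ n) (φ z))
    (hψ : ∀ z ∈ Metric.ball (0 : ℂ) 1, HasSum (fun n : ℕ => b n * z ^ n) (ψ z))
    (hφbd : ∀ z ∈ Metric.ball (0 : ℂ) 1, ‖φ z‖ ≤ Cφ)
    (hψbd : ∀ z ∈ Metric.ball (0 : ℂ) 1, ‖ψ z‖ ≤ Cψ)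
    (Tp Tφ Tψ : H →L[ℂ] H)
    (hTp : ∀ k : ℕ, Tp (e k) = ∑ j ∈ Finset.range (N + 1),
      (if j ≤ k then
        (c j * (((k : ℂ) + 1 - (j : ℂ)) / ((k : ℂ) + 1))) • e (k - j) else 0))
    (hTφ : ∀ k : ℕ, HasSum (fun n : ℕ => a n • e (n + k)) (Tφ (e k)))
    (hTψ : ∀ k : ℕ, HasSum (fun n : ℕ => b n • e (n + k)) (Tψ (e k))) :
    (W.comp (Tp + Tφ)).comp (W.comp (Tp + Tψ))
        = (W.comp (Tp + Tψ)).comp (W.comp (Tp + Tφ))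
      ↔ ∀ z ∈ Metric.ball (0 : ℂ) 1, φ z = ψ z := by
  constructor
  · intro hcomm
    have hM : ∀ k m : ℕ, SlantAux.M N c a b k m = SlantAux.M N c b a k m := by
      intro k m
      have h1 := SlantAux.entry2 he hW0 hW1 hTp Tφ Tψ a b hTφ hTψ k m
      have h2 := SlantAux.entry2 he hW0 hW1 hTp Tψ Tφ b a hTψ hTφ k m
      rw [← h1, ← h2, hcomm]
    have hab := SlantAux.coeff_eq hN hcN hM
    intro z hz
    have h := hψ z hz
    have heq : (fun n : ℕ => a n * z ^ n) = fun n : ℕ => b n * z ^ n :=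
      funext fun n => by rw [hab n]
    exact (hφ z hz).unique (by rw [heq]; exact h)
  · intro hfun
    have hab : ∀ n, a n = b n := by
      set d : ℕ → ℂ := fun n => a n - b n with hd
      set q : FormalMultilinearSeries ℂ ℂ ℂ := FormalMultilinearSeries.ofScalars ℂ d with hq
      have hsum0 : ∀ y : ℂ, y ∈ Metric.ball (0:ℂ) 1 → HasSum (fun n : ℕ => d n * y ^ n) 0 := by
        intro y hy
        have h := (hφ y hy).sub (hψ y hy)
        rw [hfun y hy, sub_self] at h
        have heq : (fun n : ℕ => d n * y ^ n)
            = fun n : ℕ => a n * y ^ n - b n * y ^ n := by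
          funext n
          rw [hd]
          ring
        rw [heq]
        exact h
      have hhalf : (1/2 : ℂ) ∈ Metric.ball (0:ℂ) 1 := by
        rw [Metric.mem_ball, dist_zero_right]
        norm_num
      have hs := (hsum0 (1/2) hhalf).summable
      have htend : Filter.Tendsto (fun n : ℕ => ‖q n‖ * ((1/2 : ℝ≥0) : ℝ) ^ n)
          Filter.atTop (nhds 0) := by
        have h1 : Filter.Tendsto (fun n : ℕ => ‖d n * (1/2:ℂ)^n‖) Filter.atTop (nhds 0) := by
          simpa using hs.tendsto_atTop_zero.norm
        have heq : (fun n : ℕ => ‖q n‖ * ((1/2 : ℝ≥0) : ℝ) ^ n)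
            = fun n : ℕ => ‖d n * (1/2:ℂ)^n‖ := by
          funext n
          have h2 : ((1/2 : ℝ≥0) : ℝ) = ‖(1/2:ℂ)‖ := by norm_num
          rw [norm_mul, norm_pow, hq, FormalMultilinearSeries.ofScalars_norm, h2]
        rw [heq]
        exact h1
      have hrad : ((1/2 : ℝ≥0) : ℝ≥0∞) ≤ q.radius := q.le_radius_of_tendsto htend
      have hball : HasFPowerSeriesOnBall (0 : ℂ → ℂ) q 0 ((1/2 : ℝ≥0) : ℝ≥0∞) := by
        refine ⟨hrad, by norm_num, ?_⟩
        intro y hy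
        rw [EMetric.mem_ball, edist_zero_right] at hy
        have hy2 : ‖y‖ < 1/2 := by
          have := ENNReal.coe_lt_coe.mp hy
          exact_mod_cast this
        have hy1 : y ∈ Metric.ball (0:ℂ) 1 := by
          rw [Metric.mem_ball, dist_zero_right]
          linarith
        simp only [zero_add, Pi.zero_apply]
        have heq : (fun n : ℕ => q n fun _ => y) = fun n : ℕ => d n * y ^ n := by
          funext n
          rw [hq, FormalMultilinearSeries.ofScalars_apply_eq, smul_eq_mul]
        rw [heq]
        exact hsum0 y hy1
      have hq0 : q = 0 := hball.hasFPowerSeriesAt.eq_zero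
      rw [hq, FormalMultilinearSeries.ofScalars_series_eq_zero] at hq0
      intro n
      have h := congrFun hq0 n
      simp only [hd, Pi.zero_apply] at h
      exact sub_eq_zero.mp h
    have hTeq : Tφ = Tψ := by
      have heqk : ∀ k : ℕ, Tφ (e k) = Tψ (e k) := by
        intro k
        refine (hTφ k).unique ?_
        have heq : (fun n : ℕ => a n • e (n + k)) = fun n : ℕ => b n • e (n + k) :=
          funext fun n => by rw [hab n]
        rw [heq]
        exact hTψ k
      have hd : Dense ((Submodule.span ℂ (Set.range e) : Submodule ℂ H) : Set H) :=
        Submodule.dense_iff_topologicalClosure_eq_top.mpr hdense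
      exact ContinuousLinearMap.ext_on hd (by rintro x ⟨k, rfl⟩; exact heqk k)
    rw [hTeq]
end
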